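/- For any α ≠ 0 in a field K of characteristic zero, the Riordan matrix T(-1 | αx - 1) is an involution in the Riordan group: its square is the identity matrix T(1|1). -/

import Mathlib

open PowerSeries

/-- `psComp f g` is the formal composition `f ∘ g`, i.e. the substitution of `g` into `f`
(meaningful when `g` has zero constant term). -/
noncomputable def psComp {K : Type*} [Field K] (f g : K⟦X⟧) : K⟦X⟧ :=
  PowerSeries.mk fun m => ∑ n ∈ Finset.range (m + 1), coeff n f * coeff m (g ^ n)


/-- Entry `(n,k)` of the Riordan matrix `T(f∣g)`: the `k`-th column has generating
function `f·x^k/g^(k+1)` (Luzón–Morón notation). -/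
noncomputable def riordanEntry {K : Type*} [Field K] (f g : K⟦X⟧) (n k : ℕ) : K :=
  coeff n (f * X ^ k * (g ^ (k + 1))⁻¹)

/-- Product of infinite lower triangular matrices. -/
noncomputable def matMul {K : Type*} [Field K] (A B : ℕ → ℕ → K) (n k : ℕ) : K :=
  ∑ j ∈ Finset.range (n + 1), A n j * B j k

lemma inv_pow_sub_one {K : Type*} [Field K] (α : K) (k : ℕ) :
    (((C α * X - 1) : K⟦X⟧) ^ (k + 1))⁻¹ =
      (-1) ^ (k + 1) * rescale α (PowerSeries.mk fun m => ((k + m).choose k : K)) := by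
  rw [eq_comm, PowerSeries.eq_inv_iff_mul_eq_one]
  · have hg : ((C α * X - 1) : K⟦X⟧) = (-1) * rescale α (1 - X) := by
      rw [map_sub, rescale_X, map_one]; ring
    rw [hg, mul_pow]
    have hkey : (rescale α (PowerSeries.mk fun m => ((k + m).choose k : K))) *
        (rescale α (1 - X)) ^ k.succ = 1 := by
      rw [← map_pow, ← map_mul, PowerSeries.mk_add_choose_mul_one_sub_pow_eq_one, map_one]
    calc (-1 : K⟦X⟧) ^ (k + 1) * rescale α (PowerSeries.mk fun m => ((k + m).choose k : K)) *
          ((-1) ^ (k + 1) * (rescale α (1 - X)) ^ (k + 1))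
        = ((-1 : K⟦X⟧) ^ (k + 1) * (-1) ^ (k + 1)) *
          ((rescale α (PowerSeries.mk fun m => ((k + m).choose k : K))) *
            (rescale α (1 - X)) ^ (k + 1)) := by ring
      _ = 1 := by
          rw [← mul_pow, neg_one_mul, neg_neg, one_pow, one_mul, hkey]
  · rw [map_pow, map_sub, map_mul, map_one, constantCoeff_X, constantCoeff_C, mul_zero,
      zero_sub]
    simp

lemma entry_eq {K : Type*} [Field K] (α : K) (n k : ℕ) :
    riordanEntry (-1) (C α * X - 1) n k = (-1) ^ k * (n.choose k : K) * α ^ (n - k) := by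
  unfold riordanEntry
  rw [inv_pow_sub_one]
  have hsign : ((-1 : K⟦X⟧) * X ^ k * ((-1) ^ (k + 1) *
      rescale α (PowerSeries.mk fun m => ((k + m).choose k : K)))) =
      (-1) ^ k * (X ^ k * rescale α (PowerSeries.mk fun m => ((k + m).choose k : K))) := by
    rw [pow_succ]; ring
  rw [hsign]
  have hC : ((-1 : K⟦X⟧) ^ k) = C ((-1) ^ k) := by rw [map_pow, map_neg, map_one]
  rw [hC, coeff_C_mul, coeff_X_pow_mul', coeff_rescale, coeff_mk]
  by_cases h : k ≤ n
  · rw [if_pos h, Nat.add_sub_cancel' h]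
    ring
  · rw [if_neg h, Nat.choose_eq_zero_of_lt (lt_of_not_ge h)]
    simp

/-- For α ≠ 0, the Riordan matrix T(-1 ∣ αx - 1) is an involution: its square is the
identity matrix T(1∣1). -/
theorem stmt7 {K : Type*} [Field K] [CharZero K] (α : K) (hα : α ≠ 0) :
    ∀ n k : ℕ,
      matMul (riordanEntry (-1) (C α * X - 1)) (riordanEntry (-1) (C α * X - 1)) n k =
        if n = k then 1 else 0 := by
  intro n k
  unfold matMul
  simp only [entry_eq]
  by_cases hkn : k ≤ n
  · -- restrict the sum to j ∈ [k, n]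
    have hsub : Finset.Ico k (n + 1) ⊆ Finset.range (n + 1) := by
      intro x hx
      simp only [Finset.mem_Ico] at hx
      simp only [Finset.mem_range]
      omega
    rw [← Finset.sum_subset hsub ?vanish]
    case vanish =>
      intro j hj hj'
      have : j < k := by
        simp only [Finset.mem_range] at hj
        simp only [Finset.mem_Ico, not_and, not_lt] at hj'
        omega
      rw [Nat.choose_eq_zero_of_lt this]
      simp
    rw [Finset.sum_Ico_eq_sum_range]
    have hne : n + 1 - k = (n - k) + 1 := by omega
    rw [hne]
    have hterm : ∀ i ∈ Finset.range (n - k + 1),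
        ((-1 : K) ^ (k + i) * (n.choose (k + i) : K) * α ^ (n - (k + i))) *
          ((-1) ^ k * ((k + i).choose k : K) * α ^ (k + i - k)) =
        ((n.choose k : K) * α ^ (n - k)) * ((-1) ^ i * ((n - k).choose i : K)) := by
      intro i hi
      have hi' : i ≤ n - k := by simpa using Nat.lt_succ_iff.mp (Finset.mem_range.mp hi)
      have hkin : k + i ≤ n := by omega
      have hch : (n.choose (k + i)) * ((k + i).choose k) = n.choose k * ((n - k).choose i) := by
        have := Nat.choose_mul (n := n) (Nat.le_add_right k i)
        simpa [Nat.add_sub_cancel_left] using this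
      have hpow : α ^ (n - (k + i)) * α ^ (k + i - k) = α ^ (n - k) := by
        rw [Nat.add_sub_cancel_left, ← pow_add]
        congr 1
        omega
      have hsgn : ((-1 : K) ^ (k + i)) * ((-1) ^ k) = (-1) ^ i := by
        rw [pow_add]
        rw [show ((-1 : K) ^ k * (-1) ^ i * (-1) ^ k) = ((-1) ^ k * (-1) ^ k) * (-1) ^ i by ring,
          ← pow_add, ← two_mul, pow_mul]
        simp
      calc ((-1 : K) ^ (k + i) * (n.choose (k + i) : K) * α ^ (n - (k + i))) *
            ((-1) ^ k * ((k + i).choose k : K) * α ^ (k + i - k))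
          = (((-1 : K) ^ (k + i)) * ((-1) ^ k)) *
            ((n.choose (k + i) : K) * ((k + i).choose k : K)) *
            (α ^ (n - (k + i)) * α ^ (k + i - k)) := by ring
        _ = ((-1 : K) ^ i) * ((n.choose k : K) * (((n - k).choose i : K))) * α ^ (n - k) := by
            rw [hsgn, hpow, ← Nat.cast_mul, hch, Nat.cast_mul]
        _ = ((n.choose k : K) * α ^ (n - k)) * ((-1) ^ i * ((n - k).choose i : K)) := by ring
    rw [Finset.sum_congr rfl hterm, ← Finset.mul_sum]
    have halt : (∑ i ∈ Finset.range (n - k + 1), ((-1 : K) ^ i * ((n - k).choose i : K))) =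
        if n - k = 0 then 1 else 0 := by
      have h := Int.alternating_sum_range_choose (n := n - k)
      have h2 := congrArg (Int.cast : ℤ → K) h
      push_cast at h2
      rw [h2]
    rw [halt]
    by_cases hnk : n = k
    · subst hnk
      simp
    · have : n - k ≠ 0 := by omega
      rw [if_neg this, if_neg hnk, mul_zero]
  · -- n < k : all terms vanish
    have hne : n ≠ k := by omega
    rw [if_neg hne]
    apply Finset.sum_eq_zero
    intro j hj
    have hjn : j ≤ n := Nat.lt_succ_iff.mp (Finset.mem_range.mp hj)
    have : j < k := by omega
    rw [Nat.choose_eq_zero_of_lt this]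
    simp
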